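/- arXiv:2406.16923 — 12 statements merged into one kernel-verified Lean document; each statement's English description precedes it below -/
import Mathlib

section
/- In a complete lattice, the join of a chained set of connected elements is connected. -/
variable {L : Type*} [CompleteLattice L]

def Separated (S : Set L) : Prop :=
  (⊥ : L) ∉ S ∧ ∀ s ∈ S, ∀ t ∈ S, s ≠ t → s ⊓ t = ⊥

def Connected (a : L) : Prop :=
  ∀ S : Set L, Separated S → a ≤ sSup S → ∃ s ∈ S, a ≤ s

def Chained (C : Set L) : Prop :=
  C.Nonempty ∧ ∀ x ∈ C, ∀ y ∈ C,
    Relation.ReflTransGen (fun a b => b ∈ C ∧ a ⊓ b ≠ ⊥) x y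

theorem join_of_chained_connected (C : Set L)
    (hC : Chained C) (hconn : ∀ c ∈ C, Connected c) :
    Connected (sSup C) := by
  intro S hS hle
  obtain ⟨⟨c₀, hc₀⟩, hchain⟩ := hC
  obtain ⟨s₀, hs₀, hcs₀⟩ := hconn c₀ hc₀ S hS ((le_sSup hc₀).trans hle)
  refine ⟨s₀, hs₀, sSup_le fun c hc => ?_⟩
  have := hchain c₀ hc₀ c hc
  clear hc
  induction this with
  | refl => exact hcs₀
  | tail _ hstep ih =>
    rename_i a b _
    obtain ⟨hbC, hab⟩ := hstep
    obtain ⟨s, hs, hbs⟩ := hconn b hbC S hS ((le_sSup hbC).trans hle)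
    rcases eq_or_ne s s₀ with rfl | hne
    · exact hbs
    · exfalso
      apply hab
      have : a ⊓ b ≤ s₀ ⊓ s := inf_le_inf ih hbs
      rw [hS.2 s₀ hs₀ s hs (Ne.symm hne)] at this
      exact le_bot_iff.mp this
end

section
/- In a complete lattice, if S and T are separated sets consisting of connected elements and ⋁S = ⋁T, then S = T. -/
variable {L : Type*} [CompleteLattice L]

theorem separated_sets_unique (S T : Set L)
    (hS : Separated S) (hT : Separated T)
    (hSc : ∀ s ∈ S, Connected s) (hTc : ∀ t ∈ T, Connected t)
    (h : sSup S = sSup T) : S = T := by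
  have key : ∀ (S T : Set L), Separated S → Separated T →
      (∀ s ∈ S, Connected s) → (∀ t ∈ T, Connected t) → sSup S = sSup T → S ⊆ T := by
    intro S T hS hT hSc hTc h s hs
    have hsT : s ≤ sSup T := h ▸ le_sSup hs
    obtain ⟨t, ht, hst⟩ := hSc s hs T hT hsT
    have htS : t ≤ sSup S := h ▸ le_sSup ht
    obtain ⟨s', hs', hts'⟩ := hTc t ht S hS htS
    have hss' : s = s' := by
      by_contra hne
      have : s ⊓ s' = ⊥ := hS.2 s hs s' hs' hne
      have hb : s = ⊥ := by
        have := inf_eq_left.mpr (hst.trans hts')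
        rw [this] at ‹s ⊓ s' = ⊥›; exact ‹s = ⊥›
      exact hS.1 (hb ▸ hs)
    have : s = t := le_antisymm hst (hss' ▸ hts')
    exact this ▸ ht
  exact le_antisymm (key S T hS hT hSc hTc h) (key T S hT hS hTc hSc h.symm)
end

section
/- In a locally connected complete lattice, every element a satisfying condition (E2) (a ≠ 0, and a = x ∨ y with x ∧ y = 0 implies x = 0 or y = 0) is connected, i.e., satisfies (E4). -/
variable {L : Type*} [CompleteLattice L]

theorem e2_implies_connected_of_locallyConnected
    (hlc : ∀ x : L, ∃ C : Set L, (∀ c ∈ C, Connected c) ∧ x = sSup C)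
    (a : L) (ha : a ≠ ⊥)
    (hE2 : ∀ x y : L, x ⊓ y = ⊥ → a = x ⊔ y → x = ⊥ ∨ y = ⊥) :
    Connected a := by
  intro S hS haS
  obtain ⟨hbot, hsep⟩ := hS
  obtain ⟨C, hC, hCeq⟩ := hlc a
  -- every piece of C lies below some member of S
  have hcs : ∀ c ∈ C, ∃ s ∈ S, c ≤ s := fun c hc =>
    hC c hc S ⟨hbot, hsep⟩ (le_trans (hCeq ▸ le_sSup hc) haS)
  set A : L → L := fun s => sSup {c | c ∈ C ∧ c ≤ s} with hA
  have hAle : ∀ s, A s ≤ s := fun s => sSup_le fun c hc => hc.2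
  have hAa : ∀ s, A s ≤ a := fun s => by
    rw [hCeq]; exact sSup_le fun c hc => le_sSup hc.1
  have haA : a = ⨆ s ∈ S, A s := by
    apply le_antisymm
    · rw [hCeq]
      refine sSup_le fun c hc => ?_
      obtain ⟨s, hs, hcsle⟩ := hcs c hc
      exact le_trans (le_sSup (show c ∈ {c | c ∈ C ∧ c ≤ s} from ⟨hc, hcsle⟩)) (le_iSup₂ (f := fun s _ => A s) s hs)
    · exact iSup₂_le fun s _ => hAa s
  -- some group is nonzero
  have hex : ∃ s ∈ S, A s ≠ ⊥ := by
    by_contra h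
    push_neg at h
    exact ha (le_bot_iff.mp (haA.le.trans (iSup₂_le fun s hs => (h s hs).le)))
  obtain ⟨s0, hs0, hx0⟩ := hex
  set x := A s0 with hxdef
  set y := sSup (A '' (S \ {s0})) with hydef
  have hya : y ≤ a := sSup_le (by rintro u ⟨t, _, rfl⟩; exact hAa t)
  have haxy : a = x ⊔ y := by
    apply le_antisymm
    · rw [haA]
      refine iSup₂_le fun s hs => ?_
      by_cases hss : s = s0
      · exact hss ▸ le_sup_left
      · exact le_trans (le_sSup (Set.mem_image_of_mem A (Set.mem_diff_singleton.mpr ⟨hs, hss⟩))) le_sup_right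
    · exact sup_le (hAa s0) hya
  -- show x ⊓ y = ⊥ using local connectedness
  have hxy : x ⊓ y = ⊥ := by
    obtain ⟨D, hD, hDeq⟩ := hlc (x ⊓ y)
    have hDbot : ∀ d ∈ D, d ≤ ⊥ := by
      intro d hd
      have hdxy : d ≤ x ⊓ y := hDeq ▸ le_sSup hd
      set T' := (A '' (S \ {s0})) \ {⊥} with hT'
      have hT'sep : Separated T' := by
        constructor
        · intro hmem; exact hmem.2 rfl
        · rintro u ⟨⟨t, ht, rfl⟩, -⟩ v ⟨⟨t', ht', rfl⟩, -⟩ huv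
          have htt' : t ≠ t' := fun h => huv (by rw [h])
          have : A t ⊓ A t' ≤ t ⊓ t' := inf_le_inf (hAle t) (hAle t')
          rw [hsep t ht.1 t' ht'.1 htt'] at this
          exact le_bot_iff.mp this
      have hyT' : y ≤ sSup T' := by
        refine sSup_le fun u hu => ?_
        by_cases hub : u = ⊥
        · exact hub ▸ bot_le
        · exact le_sSup ⟨hu, hub⟩
      obtain ⟨u, ⟨⟨t, ht, rfl⟩, hune⟩, hdu⟩ :=
        hD d hd T' hT'sep (le_trans (hdxy.trans inf_le_right) hyT')
      have hdt : d ≤ t := hdu.trans (hAle t)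
      have hds0 : d ≤ s0 := (hdxy.trans inf_le_left).trans (hAle s0)
      have : d ≤ s0 ⊓ t := le_inf hds0 hdt
      rwa [hsep s0 hs0 t ht.1 (fun h => ht.2 h.symm)] at this
    rw [hDeq]
    exact le_bot_iff.mp (sSup_le hDbot)
  rcases hE2 x y hxy haxy with h | h
  · exact absurd h hx0
  · exact ⟨s0, hs0, by rw [haxy, h, sup_bot_eq]; exact hAle s0⟩
end

section
/- In a locally connected complete lattice, for every element x there exists a separated set S of connected elements with x = ⋁S. -/
variable {L : Type*} [CompleteLattice L]

lemma Connected.ne_bot {a : L} (h : Connected a) : a ≠ ⊥ := by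
  intro hb
  obtain ⟨s, hs, -⟩ := h ∅ ⟨by simp, by simp⟩ (by simp [hb])
  exact hs

lemma Connected.sup {a b : L} (ha : Connected a) (hb : Connected b) (hab : a ⊓ b ≠ ⊥) :
    Connected (a ⊔ b) := by
  intro S hS hle
  obtain ⟨s, hsS, has⟩ := ha S hS (le_sup_left.trans hle)
  obtain ⟨t, htS, hbt⟩ := hb S hS (le_sup_right.trans hle)
  rcases eq_or_ne s t with rfl | hst
  · exact ⟨s, hsS, sup_le has hbt⟩
  · exact absurd (le_bot_iff.mp ((inf_le_inf has hbt).trans (hS.2 s hsS t htS hst).le)) hab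

theorem exists_separated_decomposition
    (hlc : ∀ x : L, ∃ C : Set L, (∀ c ∈ C, Connected c) ∧ x = sSup C)
    (x : L) :
    ∃ S : Set L, Separated S ∧ (∀ s ∈ S, Connected s) ∧ x = sSup S := by
  obtain ⟨C, hC, hxC⟩ := hlc x
  set P : Set L := {b | Connected b ∧ b ≤ x} with hPdef
  have hzorn : ∀ c ⊆ P, IsChain (· ≤ ·) c → ∀ y ∈ c, ∃ ub ∈ P, ∀ z ∈ c, z ≤ ub := by
    intro c hcP hchain y hy
    refine ⟨sSup c, ⟨?_, sSup_le fun z hz => (hcP hz).2⟩, fun z hz => le_sSup hz⟩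
    intro S hS hle
    obtain ⟨s, hsS, hys⟩ := (hcP hy).1 S hS ((le_sSup hy).trans hle)
    refine ⟨s, hsS, sSup_le fun z hz => ?_⟩
    obtain ⟨t, htS, hzt⟩ := (hcP hz).1 S hS ((le_sSup hz).trans hle)
    rcases eq_or_ne s t with rfl | hst
    · exact hzt
    rcases eq_or_ne y z with rfl | hyz
    · exact absurd (le_bot_iff.mp ((le_inf hys hzt).trans (hS.2 s hsS t htS hst).le))
        (hcP hy).1.ne_bot
    exfalso
    rcases hchain hy hz hyz with hyz' | hzy'
    · exact (hcP hy).1.ne_bot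
        (le_bot_iff.mp ((le_inf hys (hyz'.trans hzt)).trans (hS.2 s hsS t htS hst).le))
    · exact (hcP hz).1.ne_bot
        (le_bot_iff.mp ((le_inf (hzy'.trans hys) hzt).trans (hS.2 s hsS t htS hst).le))
  refine ⟨{m | Maximal (· ∈ P) m}, ⟨?_, ?_⟩, fun m hm => hm.1.1, le_antisymm ?_ ?_⟩
  · intro hbot
    exact hbot.1.1.ne_bot rfl
  · intro s hs t ht hst
    by_contra hne
    have hsup : s ⊔ t ∈ P :=
      ⟨hs.1.1.sup ht.1.1 hne, sup_le hs.1.2 ht.1.2⟩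
    have h1 : s ⊔ t ≤ s := hs.2 hsup le_sup_left
    have h2 : s ⊔ t ≤ t := ht.2 hsup le_sup_right
    exact hst (le_antisymm (le_sup_left.trans h2) (le_sup_right.trans h1))
  · rw [hxC]
    refine sSup_le fun c hc => ?_
    obtain ⟨m, hcm, hm⟩ := zorn_le_nonempty₀ P hzorn c ⟨hC c hc, hxC ▸ le_sSup hc⟩
    exact hcm.trans (le_sSup hm)
  · exact sSup_le fun m hm => hm.1.2
end

section
/- In a chainmail, every mail-connected subset has a join. -/
variable {P : Type*} [PartialOrder P]

def Mail (M : Set P) : Prop :=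
  M.Nonempty ∧ ∃ b : P, ∀ x ∈ M, b ≤ x

def IsChainmail (P : Type*) [PartialOrder P] : Prop :=
  ∀ M : Set P, Mail M → ∃ j : P, IsLUB M j

def MailConnected (C : Set P) : Prop :=
  C.Nonempty ∧ ∀ c ∈ C, ∀ d ∈ C,
    Relation.ReflTransGen
      (fun x y => x ∈ C ∧ y ∈ C ∧ ∃ b : P, b ≤ x ∧ b ≤ y) c d

theorem mailConnected_has_join (h : IsChainmail P)
    (C : Set P) (hC : MailConnected C) : ∃ j : P, IsLUB C j := by
  obtain ⟨⟨c₀, hc₀⟩, hconn⟩ := hC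
  set D : Set P := { x | c₀ ≤ x ∧ ∀ u ∈ upperBounds C, x ≤ u } with hDdef
  have hc₀D : c₀ ∈ D := ⟨le_refl _, fun u hu => hu hc₀⟩
  obtain ⟨j, hj⟩ := h D ⟨⟨c₀, hc₀D⟩, c₀, fun x hx => hx.1⟩
  have key : ∀ c, Relation.ReflTransGen
      (fun x y => x ∈ C ∧ y ∈ C ∧ ∃ b : P, b ≤ x ∧ b ≤ y) c₀ c →
      ∃ d ∈ D, c ≤ d := by
    intro c hpath
    induction hpath with
    | refl => exact ⟨c₀, hc₀D, le_refl _⟩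
    | @tail x y h₁ h₂ ih =>
      obtain ⟨d, hdD, hxd⟩ := ih
      obtain ⟨hxC, hyC, b, hbx, hby⟩ := h₂
      obtain ⟨s, hs⟩ := h {y, d} ⟨⟨y, by simp⟩, b, by
        rintro z (rfl | rfl)
        exacts [hby, le_trans hbx hxd]⟩
      refine ⟨s, ⟨le_trans hdD.1 (hs.1 (by simp)), fun u hu => hs.2 ?_⟩,
        hs.1 (by simp)⟩
      rintro z (rfl | rfl)
      exacts [hu hyC, hdD.2 u hu]
  refine ⟨j, ?_, ?_⟩
  · intro c hc
    obtain ⟨d, hdD, hcd⟩ := key c (hconn c₀ hc₀ c hc)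
    exact le_trans hcd (hj.1 hdD)
  · intro u hu
    exact hj.2 fun x hx => hx.2 u hu
end

section
/- A poset is a chainmail if and only if every mail-connected subset has a join. -/
variable {P : Type*} [PartialOrder P]

theorem chainmail_iff_mailConnected_joins :
    IsChainmail P ↔ ∀ C : Set P, MailConnected C → ∃ j : P, IsLUB C j := by
  constructor
  · intro h C hC
    obtain ⟨⟨c₀, hc₀⟩, hconn⟩ := hC
    set S : Set P := {s | ∃ T : Set P, T ⊆ C ∧ c₀ ∈ T ∧ IsLUB T s} with hSdef
    have hSmail : Mail S := by
      refine ⟨⟨c₀, ⟨{c₀}, by simpa using hc₀, rfl, isLUB_singleton⟩⟩,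
        c₀, ?_⟩
      rintro x ⟨T, hTC, hc₀T, hlub⟩
      exact hlub.1 hc₀T
    obtain ⟨j, hj⟩ := h S hSmail
    refine ⟨j, ?_, ?_⟩
    · intro c hc
      have key : ∃ s ∈ S, c ≤ s := by
        have hpath := hconn c₀ hc₀ c hc
        clear hc
        induction hpath with
        | refl => exact ⟨c₀, ⟨{c₀}, by simpa using hc₀, rfl, isLUB_singleton⟩, le_refl _⟩
        | @tail y z hcy hyz ih =>
          obtain ⟨s, ⟨T, hTC, hc₀T, hlub⟩, hys⟩ := ih
          obtain ⟨hyC, hzC, b, hby, hbz⟩ := hyz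
          obtain ⟨s', hs'⟩ := h {s, z}
            ⟨⟨s, Or.inl rfl⟩, b, by
              rintro x (rfl | rfl)
              · exact le_trans hby hys
              · exact hbz⟩
          refine ⟨s', ⟨T ∪ {z}, ?_, Or.inl hc₀T, ?_, ?_⟩, hs'.1 (Or.inr rfl)⟩
          · rintro x (hx | rfl)
            · exact hTC hx
            · exact hzC
          · rintro x (hx | rfl)
            · exact le_trans (hlub.1 hx) (hs'.1 (Or.inl rfl))
            · exact hs'.1 (Or.inr rfl)
          · intro u hu
            refine hs'.2 ?_
            rintro x (rfl | rfl)
            · exact hlub.2 fun t ht => hu (Or.inl ht)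
            · exact hu (Or.inr rfl)
      obtain ⟨s, hsS, hcs⟩ := key
      exact le_trans hcs (hj.1 hsS)
    · intro u hu
      refine hj.2 ?_
      rintro s ⟨T, hTC, hc₀T, hlub⟩
      exact hlub.2 fun t ht => hu (hTC ht)
  · intro h M hM
    obtain ⟨hne, b, hb⟩ := hM
    refine h M ⟨hne, ?_⟩
    intro c hc d hd
    exact Relation.ReflTransGen.single ⟨hc, hd, b, hb c hc, hb d hd⟩
end

section
/- For a connectivity space (X, 𝒞) — where ∅ ∈ 𝒞 and any subfamily Z ⊆ 𝒞 with nonempty intersection has union in 𝒞 — the poset of nonempty members of 𝒞 ordered by inclusion is a chainmail, with joins of mails given by unions. -/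
theorem connectivity_space_chainmail {X : Type*} (𝒞 : Set (Set X))
    (hc0 : (∅ : Set X) ∈ 𝒞)
    (hc1 : ∀ Z ⊆ 𝒞, (⋂₀ Z).Nonempty → ⋃₀ Z ∈ 𝒞)
    (M : Set (Set X)) (hM : M ⊆ {C | C ∈ 𝒞 ∧ C.Nonempty}) (hMne : M.Nonempty)
    (hlb : ∃ B, (B ∈ 𝒞 ∧ B.Nonempty) ∧ ∀ C ∈ M, B ⊆ C) :
    (⋃₀ M ∈ 𝒞 ∧ (⋃₀ M).Nonempty) ∧ (∀ C ∈ M, C ⊆ ⋃₀ M) ∧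
      ∀ U, (U ∈ 𝒞 ∧ U.Nonempty) → (∀ C ∈ M, C ⊆ U) → ⋃₀ M ⊆ U := by
  obtain ⟨B, ⟨hB𝒞, ⟨x, hxB⟩⟩, hBlb⟩ := hlb
  obtain ⟨C0, hC0⟩ := hMne
  refine ⟨⟨?_, ⟨x, C0, hC0, hBlb C0 hC0 hxB⟩⟩, fun C hC => Set.subset_sUnion_of_mem hC,
    fun U _ hU => Set.sUnion_subset hU⟩
  have := hc1 M (fun C hC => (hM hC).1) ⟨x, fun C hC => hBlb C hC hxB⟩
  exact this
end

section
/- For any complete lattice L, the poset 𝒦(L) of connected elements of L (with the induced order) is a chainmail, where the join of a mail in 𝒦(L) is its join computed in L. -/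
variable {L : Type*} [CompleteLattice L]

theorem connected_elements_chainmail
    (M : Set L) (hne : M.Nonempty) (hconn : ∀ a ∈ M, Connected a)
    (hlb : ∃ b : L, Connected b ∧ ∀ a ∈ M, b ≤ a) :
    Connected (sSup M) ∧ (∀ a ∈ M, a ≤ sSup M) ∧
      ∀ u : L, Connected u → (∀ a ∈ M, a ≤ u) → sSup M ≤ u := by
  obtain ⟨b, hbconn, hblb⟩ := hlb
  -- b ≠ ⊥: apply connectedness of b to the empty separated set
  have hbne : b ≠ ⊥ := by
    intro hb
    obtain ⟨s, hs, -⟩ := hbconn ∅ ⟨Set.notMem_empty _, by simp⟩ (by simp [hb])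
    exact hs
  refine ⟨?_, fun a ha => le_sSup ha, fun u _ h => sSup_le h⟩
  intro S hS hle
  -- b lands in some s₀ ∈ S
  obtain ⟨a₀, ha₀⟩ := hne
  have hble : b ≤ sSup S := le_trans (hblb a₀ ha₀) (le_trans (le_sSup ha₀) hle)
  obtain ⟨s₀, hs₀, hbs₀⟩ := hbconn S hS hble
  refine ⟨s₀, hs₀, sSup_le fun a ha => ?_⟩
  obtain ⟨s, hs, has⟩ := hconn a ha S hS (le_trans (le_sSup ha) hle)
  rcases eq_or_ne s s₀ with rfl | h
  · exact has
  · exfalso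
    have : b ≤ s ⊓ s₀ := le_inf (le_trans (hblb a ha) has) hbs₀
    rw [hS.2 s hs s₀ hs₀ h] at this
    exact hbne (le_bot_iff.mp this)
end

section
/- Let Γ be a chainmail and X a down-closed subset of Γ. Then X is the down-set of some totally disconnected subset of Γ if and only if the join of every subset of X that is a mail belongs to X, if and only if X is closed under joins of its mail-connected subsets. -/
variable {P : Type*} [PartialOrder P]

def TotDisc (D : Set P) : Prop :=
  ∀ d ∈ D, ∀ e ∈ D, d ≠ e → ¬ ∃ b : P, b ≤ d ∧ b ≤ e

/-- The order on totally disconnected subsets. -/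
def DLe (D₁ D₂ : Set P) : Prop := ∀ d ∈ D₁, ∃ e ∈ D₂, d ≤ e

/-- Auxiliary relation: two elements of `X` with a common lower bound. -/
def AuxRel (X : Set P) (a b : P) : Prop :=
  a ∈ X ∧ b ∈ X ∧ ∃ c : P, c ≤ a ∧ c ≤ b

lemma auxRel_symm (X : Set P) : Symmetric (AuxRel X) := by
  rintro a b ⟨ha, hb, c, hca, hcb⟩
  exact ⟨hb, ha, c, hcb, hca⟩

/-- The mail-connectedness component of `x` inside `X`. -/
def AuxComp (X : Set P) (x : P) : Set P :=
  {y | Relation.ReflTransGen (AuxRel X) x y}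

lemma auxComp_self (X : Set P) (x : P) : x ∈ AuxComp X x :=
  Relation.ReflTransGen.refl

lemma auxComp_subset {X : Set P} {x : P} (hx : x ∈ X) : AuxComp X x ⊆ X := by
  intro y hy
  induction hy with
  | refl => exact hx
  | tail _ h _ => exact h.2.1

lemma auxComp_trans {X : Set P} {x y z : P} (hy : y ∈ AuxComp X x)
    (hz : z ∈ AuxComp X y) : z ∈ AuxComp X x :=
  Relation.ReflTransGen.trans hy hz

lemma auxComp_symm {X : Set P} {x y : P} (hy : y ∈ AuxComp X x) :
    x ∈ AuxComp X y :=
  (@Relation.ReflTransGen.stdSymm _ _ ⟨fun _ _ h => auxRel_symm X h⟩).symm _ _ hy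

lemma auxComp_eq {X : Set P} {x y : P} (hy : y ∈ AuxComp X x) :
    AuxComp X x = AuxComp X y := by
  ext z
  exact ⟨fun hz => auxComp_trans (auxComp_symm hy) hz, fun hz => auxComp_trans hy hz⟩

lemma auxComp_connected {X : Set P} {x : P} (hx : x ∈ X) :
    MailConnected (AuxComp X x) := by
  have key : ∀ y ∈ AuxComp X x,
      Relation.ReflTransGen
        (fun a b => a ∈ AuxComp X x ∧ b ∈ AuxComp X x ∧ ∃ c : P, c ≤ a ∧ c ≤ b)
        x y := by
    intro y hy
    induction hy with
    | refl => exact Relation.ReflTransGen.refl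
    | @tail b c hb hstep ih =>
      exact Relation.ReflTransGen.tail ih
        ⟨hb, Relation.ReflTransGen.tail hb hstep, hstep.2.2⟩
  refine ⟨⟨x, auxComp_self X x⟩, fun c hc d hd => ?_⟩
  have hsym : Symmetric
      (fun a b => a ∈ AuxComp X x ∧ b ∈ AuxComp X x ∧ ∃ c : P, c ≤ a ∧ c ≤ b) := by
    rintro a b ⟨ha, hb, e, hea, heb⟩
    exact ⟨hb, ha, e, heb, hea⟩
  exact Relation.ReflTransGen.trans
    ((@Relation.ReflTransGen.stdSymm _ _ ⟨fun _ _ h => hsym h⟩).symm _ _ (key c hc)) (key d hd)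

/-- Key lemma: under mail-join closure, every mail-connected subset of `X`
has a least upper bound which lies in `X`. -/
lemma connected_sup (hΓ : IsChainmail P) (X : Set P)
    (hX : ∀ M ⊆ X, Mail M → ∀ j : P, IsLUB M j → j ∈ X)
    (C : Set P) (hC : C ⊆ X) (hconn : MailConnected C) :
    ∃ s : P, IsLUB C s ∧ s ∈ X := by
  obtain ⟨⟨x, hx⟩, hpath⟩ := hconn
  set E : Set P := {e | e ∈ X ∧ x ≤ e ∧ ∀ u ∈ upperBounds C, e ≤ u} with hE
  have hEX : E ⊆ X := fun e he => he.1
  have hxE : x ∈ E := ⟨hC hx, le_refl x, fun u hu => hu hx⟩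
  have hmail : Mail E := ⟨⟨x, hxE⟩, x, fun e he => he.2.1⟩
  obtain ⟨s, hs⟩ := hΓ E hmail
  have hsX : s ∈ X := hX E hEX hmail s hs
  refine ⟨s, ⟨?_, ?_⟩, hsX⟩
  · -- s is an upper bound of C
    intro c hc
    have : ∃ e ∈ E, c ≤ e := by
      have hp := hpath x hx c hc
      clear hc
      induction hp with
      | refl => exact ⟨x, hxE, le_refl x⟩
      | @tail b c hb hstep ih =>
        obtain ⟨e, heE, hbe⟩ := ih
        obtain ⟨hbC, hcC, w, hwb, hwc⟩ := hstep
        have hmail2 : Mail {e, c} :=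
          ⟨⟨e, Set.mem_insert e _⟩, w, by
            rintro y (rfl | rfl)
            · exact le_trans hwb hbe
            · simpa using hwc⟩
        obtain ⟨f, hf⟩ := hΓ {e, c} hmail2
        have hsub : ({e, c} : Set P) ⊆ X := by
          rintro y (rfl | rfl)
          · exact heE.1
          · simpa using hC hcC
        have hfX : f ∈ X := hX {e, c} hsub hmail2 f hf
        have hef : e ≤ f := hf.1 (Set.mem_insert e _)
        have hcf : c ≤ f := hf.1 (Set.mem_insert_of_mem _ rfl)
        refine ⟨f, ⟨hfX, le_trans heE.2.1 hef, fun u hu => ?_⟩, hcf⟩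
        refine hf.2 ?_
        rintro y (rfl | rfl)
        · exact heE.2.2 u hu
        · exact hu hcC
    obtain ⟨e, heE, hce⟩ := this
    exact le_trans hce (hs.1 heE)
  · -- s is below every upper bound of C
    intro u hu
    exact hs.2 (fun e he => he.2.2 u hu)

theorem subchainmail_characterization (hΓ : IsChainmail P)
    (X : Set P) (hdown : ∀ x ∈ X, ∀ y : P, y ≤ x → y ∈ X) :
    ((∃ D : Set P, TotDisc D ∧ X = {y : P | ∃ d ∈ D, y ≤ d}) ↔
      (∀ M ⊆ X, Mail M → ∀ j : P, IsLUB M j → j ∈ X)) ∧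
    ((∀ M ⊆ X, Mail M → ∀ j : P, IsLUB M j → j ∈ X) ↔
      (∀ C ⊆ X, MailConnected C → ∀ j : P, IsLUB C j → j ∈ X)) := by
  constructor
  · constructor
    · -- ∃ D → mail closure
      rintro ⟨D, hD, rfl⟩ M hM ⟨⟨m₀, hm₀⟩, b, hb⟩ j hj
      obtain ⟨d₀, hd₀, hmd₀⟩ := hM hm₀
      have hub : ∀ m ∈ M, m ≤ d₀ := by
        intro m hm
        obtain ⟨d, hd, hmd⟩ := hM hm
        rcases eq_or_ne d d₀ with rfl | hne
        · exact hmd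
        · exact absurd ⟨b, le_trans (hb m hm) hmd, le_trans (hb m₀ hm₀) hmd₀⟩
            (hD d hd d₀ hd₀ hne)
      exact ⟨d₀, hd₀, hj.2 hub⟩
    · -- mail closure → ∃ D
      intro hX
      refine ⟨{s | ∃ x ∈ X, IsLUB (AuxComp X x) s}, ?_, ?_⟩
      · -- totally disconnected
        rintro s ⟨x, hx, hsl⟩ t ⟨y, hy, htl⟩ hne ⟨b, hbs, hbt⟩
        obtain ⟨s', hs', hs'X⟩ := connected_sup hΓ X hX (AuxComp X x)
          (auxComp_subset hx) (auxComp_connected hx)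
        obtain ⟨t', ht', ht'X⟩ := connected_sup hΓ X hX (AuxComp X y)
          (auxComp_subset hy) (auxComp_connected hy)
        have hss : s = s' := hsl.unique hs'
        have htt : t = t' := htl.unique ht'
        subst hss; subst htt
        -- s ∈ AuxComp X x, t ∈ AuxComp X y, and s, t related
        have hsC : s ∈ AuxComp X x :=
          Relation.ReflTransGen.single ⟨hx, hs'X, x, le_refl x, hsl.1 (auxComp_self X x)⟩
        have htC : t ∈ AuxComp X y :=
          Relation.ReflTransGen.single ⟨hy, ht'X, y, le_refl y, htl.1 (auxComp_self X y)⟩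
        have hst : t ∈ AuxComp X s :=
          Relation.ReflTransGen.single ⟨hs'X, ht'X, b, hbs, hbt⟩
        have : AuxComp X x = AuxComp X y := by
          rw [auxComp_eq hsC, auxComp_eq hst, ← auxComp_eq htC]
        exact hne (hsl.unique (this ▸ htl))
      · -- X = down-set of D
        ext z
        constructor
        · intro hz
          obtain ⟨s, hs, hsX⟩ := connected_sup hΓ X hX (AuxComp X z)
            (auxComp_subset hz) (auxComp_connected hz)
          exact ⟨s, ⟨z, hz, hs⟩, hs.1 (auxComp_self X z)⟩
        · rintro ⟨s, ⟨x, hx, hsl⟩, hzs⟩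
          obtain ⟨s', hs', hs'X⟩ := connected_sup hΓ X hX (AuxComp X x)
            (auxComp_subset hx) (auxComp_connected hx)
          exact hdown s' hs'X z (hsl.unique hs' ▸ hzs)
  · constructor
    · -- mail closure → connected closure
      intro hX C hC hconn j hj
      obtain ⟨s, hs, hsX⟩ := connected_sup hΓ X hX C hC hconn
      exact hj.unique hs ▸ hsX
    · -- connected closure → mail closure (every mail is mail-connected)
      intro hX M hM ⟨hne, b, hb⟩ j hj
      refine hX M hM ⟨hne, fun c hc d hd => ?_⟩ j hj
      exact Relation.ReflTransGen.single ⟨hc, hd, b, hb c hc, hb d hd⟩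
end

section
/- For any chainmail Γ, the poset 𝒟(Γ) of totally disconnected subsets of Γ, ordered by D₁ ≤ D₂ iff every element of D₁ is below some element of D₂, is a complete lattice. -/
variable {P : Type*} [PartialOrder P]

/-- The "common lower bound" relation restricted to a set `C`. -/
def CRel (C : Set P) (x y : P) : Prop :=
  x ∈ C ∧ y ∈ C ∧ ∃ b : P, b ≤ x ∧ b ≤ y

lemma crel_symm {C : Set P} : Symmetric (CRel C) :=
  fun _ _ ⟨hx, hy, b, h1, h2⟩ => ⟨hy, hx, b, h2, h1⟩

/-- In a chainmail, a mail-connected set has a least upper bound. -/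
lemma conn_sup (hΓ : IsChainmail P) {C : Set P} {c₀ : P} (hc₀ : c₀ ∈ C)
    (hconn : ∀ d ∈ C, Relation.ReflTransGen (CRel C) c₀ d) :
    ∃ j : P, IsLUB C j := by
  set W : Set P := {w | ∃ A : Set P, A ⊆ C ∧ c₀ ∈ A ∧ IsLUB A w} with hWdef
  have hc₀W : c₀ ∈ W := ⟨{c₀}, Set.singleton_subset_iff.mpr hc₀, rfl, isLUB_singleton⟩
  have hWmail : Mail W := by
    refine ⟨⟨c₀, hc₀W⟩, c₀, fun w hw => ?_⟩
    obtain ⟨A, hAC, hcA, hA⟩ := hw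
    exact hA.1 hcA
  obtain ⟨j, hj⟩ := hΓ W hWmail
  have key : ∀ d, Relation.ReflTransGen (CRel C) c₀ d → ∃ w ∈ W, d ≤ w := by
    intro d h
    induction h with
    | refl => exact ⟨c₀, hc₀W, le_refl _⟩
    | @tail b c hab hbc ih =>
      obtain ⟨w, hwW, hbw⟩ := ih
      obtain ⟨hbC, hcC, b', hb'1, hb'2⟩ := hbc
      obtain ⟨A, hAC, hcA, hA⟩ := hwW
      obtain ⟨s, hs⟩ := hΓ {w, c} ⟨⟨w, Or.inl rfl⟩, b', by
        rintro x (rfl | rfl)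
        · exact le_trans hb'1 hbw
        · exact hb'2⟩
      refine ⟨s, ⟨insert c A, Set.insert_subset hcC hAC,
        Set.mem_insert_of_mem _ hcA, ?_, ?_⟩, hs.1 (Or.inr rfl)⟩
      · rintro x (rfl | hxA)
        · exact hs.1 (Or.inr rfl)
        · exact le_trans (hA.1 hxA) (hs.1 (Or.inl rfl))
      · intro u hu
        apply hs.2
        rintro x (rfl | rfl)
        · exact hA.2 (fun y hy => hu (Set.mem_insert_of_mem _ hy))
        · exact hu (Set.mem_insert _ _)
  refine ⟨j, ?_, ?_⟩
  · intro c hc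
    obtain ⟨w, hwW, hcw⟩ := key c (hconn c hc)
    exact le_trans hcw (hj.1 hwW)
  · intro u hu
    apply hj.2
    rintro w ⟨A, hAC, _, hA⟩
    exact hA.2 (fun x hx => hu (hAC hx))

/-- The connected component of `z` inside `Z`. -/
def compo (Z : Set P) (z : P) : Set P :=
  {w | Relation.ReflTransGen (CRel Z) z w}

lemma compo_path {Z : Set P} {z w : P} (h : w ∈ compo Z z) :
    Relation.ReflTransGen (CRel (compo Z z)) z w := by
  induction h with
  | refl => exact .refl
  | @tail b c hab hbc ih =>
      exact ih.tail ⟨hab, hab.tail hbc, hbc.2.2⟩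

lemma compo_conn {Z : Set P} {z : P} :
    ∀ w ∈ compo Z z, ∀ w' ∈ compo Z z,
      Relation.ReflTransGen (CRel (compo Z z)) w w' := by
  intro w hw w' hw'
  exact ((@Relation.ReflTransGen.stdSymm _ (CRel (compo Z z)) ⟨crel_symm⟩).symm _ _ (compo_path hw)).trans (compo_path hw')

lemma compo_eq {Z : Set P} {z w : P} (h : w ∈ compo Z z) :
    compo Z z = compo Z w := by
  ext t
  constructor
  · intro ht
    exact ((@Relation.ReflTransGen.stdSymm _ (CRel Z) ⟨crel_symm⟩).symm _ _ h).trans ht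
  · intro ht
    exact Relation.ReflTransGen.trans h ht

lemma compo_subset {Z : Set P} {z : P} (hz : z ∈ Z) : compo Z z ⊆ Z := by
  intro w hw
  induction hw with
  | refl => exact hz
  | @tail b c hab hbc ih => exact hbc.2.1

/-- Closure of `X` under sups of connected subsets. -/
inductive Cl {P : Type*} [PartialOrder P] (X : Set P) : P → Prop
  | base {x : P} : x ∈ X → Cl X x
  | sup {C : Set P} {j : P} : C.Nonempty → (∀ c ∈ C, Cl X c) →
      (∀ c ∈ C, ∀ d ∈ C, Relation.ReflTransGen (CRel C) c d) →
      IsLUB C j → Cl X j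

/-- Every element of the closure is dominated by an element of any totally
disconnected set dominating `X`. -/
lemma cl_le {X U : Set P} (hU : TotDisc U)
    (hdom : ∀ x ∈ X, ∃ u ∈ U, x ≤ u) :
    ∀ z : P, Cl X z → ∃ u ∈ U, z ≤ u := by
  intro z hz
  induction hz with
  | base hx => exact hdom _ hx
  | @sup C j hne hall hconn hj ih =>
    obtain ⟨c₀, hc₀⟩ := hne
    obtain ⟨u₀, hu₀U, hc₀u₀⟩ := ih c₀ hc₀
    have hub : ∀ d, Relation.ReflTransGen (CRel C) c₀ d → d ≤ u₀ := by
      intro d h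
      induction h with
      | refl => exact hc₀u₀
      | @tail b c hab hbc ihb =>
        obtain ⟨hbC, hcC, b', hb'1, hb'2⟩ := hbc
        obtain ⟨u', hu'U, hcu'⟩ := ih c hcC
        have heq : u' = u₀ := by
          by_contra hne'
          exact hU u' hu'U u₀ hu₀U hne' ⟨b', le_trans hb'2 hcu', le_trans hb'1 ihb⟩
        exact heq ▸ hcu'
    exact ⟨u₀, hu₀U, hj.2 (fun c hc => hub c (hconn c₀ hc₀ c hc))⟩

theorem totDisc_complete_lattice (hΓ : IsChainmail P) :
    (∀ D₁ D₂ : Set P, TotDisc D₁ → TotDisc D₂ →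
      DLe D₁ D₂ → DLe D₂ D₁ → D₁ = D₂) ∧
    (∀ 𝒮 : Set (Set P), (∀ D ∈ 𝒮, TotDisc D) →
      ∃ J : Set P, TotDisc J ∧ (∀ D ∈ 𝒮, DLe D J) ∧
        ∀ U : Set P, TotDisc U → (∀ D ∈ 𝒮, DLe D U) → DLe J U) := by
  constructor
  · -- antisymmetry
    have sub : ∀ D₁ D₂ : Set P, TotDisc D₁ → DLe D₁ D₂ → DLe D₂ D₁ → D₁ ⊆ D₂ := by
      intro D₁ D₂ h₁ h₁₂ h₂₁ d hd
      obtain ⟨e, he, hde⟩ := h₁₂ d hd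
      obtain ⟨f, hf, hef⟩ := h₂₁ e he
      have hdf : d = f := by
        by_contra hne
        exact h₁ d hd f hf hne ⟨d, le_refl d, le_trans hde hef⟩
      have : d = e := le_antisymm hde (hdf ▸ hef)
      exact this ▸ he
    intro D₁ D₂ h₁ h₂ h₁₂ h₂₁
    exact Set.Subset.antisymm (sub D₁ D₂ h₁ h₁₂ h₂₁) (sub D₂ D₁ h₂ h₂₁ h₁₂)
  · -- joins
    intro 𝒮 h𝒮
    set X : Set P := ⋃₀ 𝒮 with hXdef
    set Z : Set P := {p | Cl X p} with hZdef
    -- each component of Z has a sup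
    have hcompsup : ∀ z ∈ Z, ∃ j, IsLUB (compo Z z) j := by
      intro z hz
      exact conn_sup hΓ (Relation.ReflTransGen.refl) (fun d hd => compo_path hd)
    set J : Set P := {j | ∃ z ∈ Z, IsLUB (compo Z z) j} with hJdef
    -- sups of components are in Z and in their own component
    have hsupZ : ∀ z ∈ Z, ∀ j, IsLUB (compo Z z) j → j ∈ Z := by
      intro z hz j hj
      exact Cl.sup ⟨z, Relation.ReflTransGen.refl⟩
        (fun c hc => compo_subset hz hc) compo_conn hj
    have hsupmem : ∀ z ∈ Z, ∀ j, IsLUB (compo Z z) j → j ∈ compo Z z := by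
      intro z hz j hj
      exact Relation.ReflTransGen.single
        ⟨hz, hsupZ z hz j hj, z, le_refl z, hj.1 Relation.ReflTransGen.refl⟩
    refine ⟨J, ?_, ?_, ?_⟩
    · -- totally disconnected
      rintro j₁ ⟨z₁, hz₁, hj₁⟩ j₂ ⟨z₂, hz₂, hj₂⟩ hne ⟨b, hb₁, hb₂⟩
      have hm₁ : j₁ ∈ compo Z z₁ := hsupmem z₁ hz₁ j₁ hj₁
      have hm₂ : j₂ ∈ compo Z z₂ := hsupmem z₂ hz₂ j₂ hj₂
      have hZ₁ : j₁ ∈ Z := hsupZ z₁ hz₁ j₁ hj₁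
      have hZ₂ : j₂ ∈ Z := hsupZ z₂ hz₂ j₂ hj₂
      have hlink : j₂ ∈ compo Z j₁ :=
        Relation.ReflTransGen.single ⟨hZ₁, hZ₂, b, hb₁, hb₂⟩
      have : compo Z z₁ = compo Z z₂ := by
        rw [compo_eq hm₁, compo_eq hlink, ← compo_eq hm₂]
      exact hne (hj₁.unique (this ▸ hj₂))
    · -- upper bound
      intro D hD d hd
      have hdZ : d ∈ Z := Cl.base ⟨D, hD, hd⟩
      obtain ⟨j, hj⟩ := hcompsup d hdZ
      exact ⟨j, ⟨d, hdZ, hj⟩, hj.1 Relation.ReflTransGen.refl⟩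
    · -- least
      intro U hU hdomU j hjJ
      obtain ⟨z, hz, hj⟩ := hjJ
      have hjZ : j ∈ Z := hsupZ z hz j hj
      have hdom : ∀ x ∈ X, ∃ u ∈ U, x ≤ u := by
        rintro x ⟨D, hD, hxD⟩
        exact hdomU D hD x hxD
      exact cl_le hU hdom j hjZ
end

section
/- For any chainmail Γ, a set S of totally disconnected subsets of Γ is separated in the complete lattice 𝒟(Γ) if and only if ∅ ∉ S, the members of S are pairwise disjoint, and ⋃S is totally disconnected in Γ; in that case ⋃S is the join of S in 𝒟(Γ). -/
variable {P : Type*} [PartialOrder P]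

/-- Separatedness in the complete lattice of totally disconnected sets:
the bottom element ∅ is excluded and any two distinct members have
greatest lower bound ∅. -/
def SeparatedD (S : Set (Set P)) : Prop :=
  (∅ : Set P) ∉ S ∧ ∀ D₁ ∈ S, ∀ D₂ ∈ S, D₁ ≠ D₂ →
    ∀ E : Set P, TotDisc E → DLe E D₁ → DLe E D₂ → E = ∅

theorem separated_in_totDisc_lattice (hΓ : IsChainmail P)
    (S : Set (Set P)) (hS : ∀ D ∈ S, TotDisc D) :
    (SeparatedD S ↔
      ((∅ : Set P) ∉ S ∧ (∀ D₁ ∈ S, ∀ D₂ ∈ S, D₁ ≠ D₂ → Disjoint D₁ D₂) ∧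
        TotDisc (⋃₀ S))) ∧
    (SeparatedD S →
      TotDisc (⋃₀ S) ∧ (∀ D ∈ S, DLe D (⋃₀ S)) ∧
        ∀ U : Set P, TotDisc U → (∀ D ∈ S, DLe D U) → DLe (⋃₀ S) U) := by

  have singTD : ∀ b : P, TotDisc ({b} : Set P) := by
    intro b d hd e he hne
    simp only [Set.mem_singleton_iff] at hd he
    exact absurd (hd.trans he.symm) hne
  have fwd : SeparatedD S →
      ((∅ : Set P) ∉ S ∧ (∀ D₁ ∈ S, ∀ D₂ ∈ S, D₁ ≠ D₂ → Disjoint D₁ D₂) ∧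
        TotDisc (⋃₀ S)) := by
    rintro ⟨hne, hsep⟩
    refine ⟨hne, ?_, ?_⟩
    · intro D₁ h₁ D₂ h₂ hD
      rw [Set.disjoint_left]
      intro x hx₁ hx₂
      have := hsep D₁ h₁ D₂ h₂ hD {x} (singTD x)
        (fun d hd => ⟨x, hx₁, le_of_eq hd⟩)
        (fun d hd => ⟨x, hx₂, le_of_eq hd⟩)
      exact absurd this (Set.singleton_ne_empty x)
    · rintro d ⟨D₁, h₁, hd⟩ e ⟨D₂, h₂, he⟩ hne ⟨b, hbd, hbe⟩
      by_cases hD : D₁ = D₂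
      · subst hD
        exact hS D₁ h₁ d hd e he hne ⟨b, hbd, hbe⟩
      · have := hsep D₁ h₁ D₂ h₂ hD {b} (singTD b)
          (fun x hx => ⟨d, hd, hx ▸ hbd⟩)
          (fun x hx => ⟨e, he, hx ▸ hbe⟩)
        exact absurd this (Set.singleton_ne_empty b)
  have bwd : ((∅ : Set P) ∉ S ∧ (∀ D₁ ∈ S, ∀ D₂ ∈ S, D₁ ≠ D₂ → Disjoint D₁ D₂) ∧
        TotDisc (⋃₀ S)) → SeparatedD S := by
    rintro ⟨hne, hdisj, htd⟩
    refine ⟨hne, ?_⟩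
    intro D₁ h₁ D₂ h₂ hD E hE hE₁ hE₂
    rw [Set.eq_empty_iff_forall_notMem]
    intro x hx
    obtain ⟨d, hd, hxd⟩ := hE₁ x hx
    obtain ⟨e, he, hxe⟩ := hE₂ x hx
    by_cases hde : d = e
    · exact Set.disjoint_left.mp (hdisj D₁ h₁ D₂ h₂ hD) hd (hde ▸ he)
    · exact htd d ⟨D₁, h₁, hd⟩ e ⟨D₂, h₂, he⟩ hde ⟨x, hxd, hxe⟩
  refine ⟨⟨fwd, bwd⟩, ?_⟩
  intro hsep
  refine ⟨(fwd hsep).2.2, ?_, ?_⟩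
  · intro D hD d hd
    exact ⟨d, ⟨D, hD, hd⟩, le_rfl⟩
  · rintro U _ hU d ⟨D, hD, hd⟩
    exact hU D hD d hd
end

section
/- For any chainmail Γ, the connected elements of the complete lattice 𝒟(Γ) are exactly the singletons {x} for x ∈ Γ; consequently 𝒟(Γ) is locally connected, and the map x ↦ {x} is an order isomorphism from Γ onto the poset of connected elements of 𝒟(Γ). -/
variable {P : Type*} [PartialOrder P]

def IsLUBD (S : Set (Set P)) (J : Set P) : Prop :=
  (∀ D ∈ S, DLe D J) ∧ ∀ U : Set P, TotDisc U → (∀ D ∈ S, DLe D U) → DLe J U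

/-- Connectedness (condition (E4)) in the complete lattice of totally
disconnected subsets. -/
def ConnectedD (D : Set P) : Prop :=
  ∀ S : Set (Set P), (∀ E ∈ S, TotDisc E) → SeparatedD S →
    ∀ J : Set P, TotDisc J → IsLUBD S J → DLe D J → ∃ E ∈ S, DLe D E

lemma totDisc_singleton (x : P) : TotDisc ({x} : Set P) := by
  intro d hd e he hne
  simp only [Set.mem_singleton_iff] at hd he
  subst hd; subst he
  exact absurd rfl hne

lemma connectedD_singleton (x : P) : ConnectedD ({x} : Set P) := by
  intro S hS hsep J hJ hlub hxJ
  obtain ⟨j, hjJ, hxj⟩ := hxJ x rfl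
  -- the union of a separated family is totally disconnected
  have hU : TotDisc (⋃₀ S) := by
    rintro d ⟨E₁, hE₁, hd⟩ e ⟨E₂, hE₂, he⟩ hne ⟨b, hbd, hbe⟩
    by_cases hEE : E₁ = E₂
    · subst hEE
      exact hS E₁ hE₁ d hd e he hne ⟨b, hbd, hbe⟩
    · have hb : ({b} : Set P) = ∅ := by
        refine hsep.2 E₁ hE₁ E₂ hE₂ hEE {b} (totDisc_singleton b) ?_ ?_
        · intro c hc
          simp only [Set.mem_singleton_iff] at hc; subst hc
          exact ⟨d, hd, hbd⟩
        · intro c hc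
          simp only [Set.mem_singleton_iff] at hc; subst hc
          exact ⟨e, he, hbe⟩
      exact (Set.singleton_ne_empty b) hb
  have hub : ∀ D ∈ S, DLe D (⋃₀ S) := by
    intro D hD d hd
    exact ⟨d, ⟨D, hD, hd⟩, le_refl d⟩
  have hJU : DLe J (⋃₀ S) := hlub.2 (⋃₀ S) hU hub
  obtain ⟨u, ⟨E, hE, huE⟩, hju⟩ := hJU j hjJ
  refine ⟨E, hE, ?_⟩
  intro d hd
  simp only [Set.mem_singleton_iff] at hd; subst hd
  exact ⟨u, huE, le_trans hxj hju⟩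

theorem totDisc_lattice_locally_connected (hΓ : IsChainmail P) :
    (∀ x : P, TotDisc {x} ∧ ConnectedD ({x} : Set P)) ∧
    (∀ D : Set P, TotDisc D → ConnectedD D → ∃ x : P, D = {x}) ∧
    (∀ D : Set P, TotDisc D →
      ∃ S : Set (Set P), (∀ E ∈ S, TotDisc E ∧ ConnectedD E) ∧ IsLUBD S D) ∧
    (Function.Injective (fun x : P => ({x} : Set P))) ∧
    (∀ x y : P, x ≤ y ↔ DLe ({x} : Set P) {y}) := by
  refine ⟨fun x => ⟨totDisc_singleton x, connectedD_singleton x⟩, ?_, ?_, ?_, ?_⟩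
  · -- connected totally disconnected sets are singletons
    intro D hD hC
    set S : Set (Set P) := {E | ∃ d ∈ D, E = {d}} with hSdef
    have hS : ∀ E ∈ S, TotDisc E := by
      rintro E ⟨d, _, rfl⟩; exact totDisc_singleton d
    have hsep : SeparatedD S := by
      constructor
      · rintro ⟨d, _, hd⟩
        exact (Set.singleton_ne_empty d) hd.symm
      · rintro E₁ ⟨d₁, hd₁, rfl⟩ E₂ ⟨d₂, hd₂, rfl⟩ hne E hE h₁ h₂
        have hdne : d₁ ≠ d₂ := fun h => hne (by rw [h])
        ext e
        simp only [Set.mem_empty_iff_false, iff_false]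
        intro he
        obtain ⟨e₁, he₁, hle₁⟩ := h₁ e he
        obtain ⟨e₂, he₂, hle₂⟩ := h₂ e he
        simp only [Set.mem_singleton_iff] at he₁ he₂
        exact hD d₁ hd₁ d₂ hd₂ hdne ⟨e, he₁ ▸ hle₁, he₂ ▸ hle₂⟩
    have hlub : IsLUBD S D := by
      constructor
      · rintro E ⟨d, hd, rfl⟩ e he
        simp only [Set.mem_singleton_iff] at he
        exact ⟨d, hd, he.le⟩
      · intro U _ hub d hd
        exact hub {d} ⟨d, hd, rfl⟩ d rfl
    obtain ⟨E, hES, hDE⟩ := hC S hS hsep D hD hlub (fun d hd => ⟨d, hd, le_refl d⟩)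
    obtain ⟨d, hdD, rfl⟩ := hES
    refine ⟨d, ?_⟩
    ext e
    simp only [Set.mem_singleton_iff]
    constructor
    · intro he
      obtain ⟨e', he', hle⟩ := hDE e he
      by_contra hne
      exact hD e he d hdD hne ⟨e, le_refl e, he' ▸ hle⟩
    · rintro rfl; exact hdD
  · -- local connectedness
    intro D hD
    refine ⟨{E | ∃ d ∈ D, E = {d}}, ?_, ?_, ?_⟩
    · rintro E ⟨d, _, rfl⟩
      exact ⟨totDisc_singleton d, connectedD_singleton d⟩
    · rintro E ⟨d, hd, rfl⟩ e he
      simp only [Set.mem_singleton_iff] at he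
      exact ⟨d, hd, he.le⟩
    · intro U _ hub d hd
      exact hub {d} ⟨d, hd, rfl⟩ d rfl
  · exact fun x y h => Set.singleton_injective h
  · intro x y
    constructor
    · intro h d hd
      simp only [Set.mem_singleton_iff] at hd; subst hd
      exact ⟨y, rfl, h⟩
    · intro h
      obtain ⟨e, he, hle⟩ := h x rfl
      simp only [Set.mem_singleton_iff] at he; subst he
      exact hle
end
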